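/- arXiv:1909.11319 — 4 statements merged into one kernel-verified Lean document; each statement's English description precedes it below -/
import Mathlib

section
/- Let a be a nonzero integer, let k ≥ 1 be an integer, and let y be a rational number with |y| ≥ 1 and y ≠ −1. Then [a, −2, …, −2, y] (with k copies of −2 between a and y) = [a + 1, k + 1, y + 1]. -/
/-- The (subtractive) continued fraction value of a finite list of rationals:
`cf [] = 0` and `cf (a :: t) = (a - cf t)⁻¹`. -/
def cf : List ℚ → ℚ
  | [] => 0
  | a :: t => (a - cf t)⁻¹

lemma den_ne (y : ℚ) (hy1 : 1 ≤ |y|) (k : ℕ) : ((k : ℚ) + 1) * y + k ≠ 0 := by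
  intro h
  have h1 : ((k : ℚ) + 1) * y = -k := by linarith
  have h2 : |((k : ℚ) + 1) * y| = (k : ℚ) := by
    rw [h1, abs_neg, abs_of_nonneg (by positivity)]
  rw [abs_mul, abs_of_pos (by positivity : (0 : ℚ) < (k : ℚ) + 1)] at h2
  nlinarith [abs_nonneg y]

lemma cf_rep (y : ℚ) (hy1 : 1 ≤ |y|) (k : ℕ) :
    cf (List.replicate k (-2 : ℚ) ++ [y]) =
      -((k : ℚ) * y + ((k : ℚ) - 1)) / (((k : ℚ) + 1) * y + k) := by
  induction k with
  | zero =>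
      have hy0 : y ≠ 0 := by
        intro h; rw [h] at hy1; simp at hy1; linarith
      simp [cf]
  | succ n ih =>
      have hd : ((n : ℚ) + 1) * y + n ≠ 0 := den_ne y hy1 n
      have hd' : ((n : ℚ) + 1 + 1) * y + ((n : ℚ) + 1) ≠ 0 := by
        have := den_ne y hy1 (n + 1)
        push_cast at this
        convert this using 2 <;> ring
      rw [List.replicate_succ, List.cons_append]
      rw [show cf ((-2 : ℚ) :: (List.replicate n (-2 : ℚ) ++ [y])) =
        ((-2 : ℚ) - cf (List.replicate n (-2 : ℚ) ++ [y]))⁻¹ from rfl]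
      rw [ih]
      push_cast
      rw [eq_div_iff hd', inv_mul_eq_div, div_eq_iff]
      · field_simp
        ring
      · intro h
        apply hd'
        have h2 : (-2 : ℚ) * (((n : ℚ) + 1) * y + n) - (-((n : ℚ) * y + ((n : ℚ) - 1))) = 0 := by
          have hd2 : y * ((n : ℚ) + 1) + n ≠ 0 := by rw [mul_comm]; exact hd
          field_simp [hd2] at h
          linarith [h]
        linarith [h2]

theorem stmt_3 (a : ℤ) (ha : a ≠ 0) (k : ℕ) (hk : 1 ≤ k) (y : ℚ)
    (hy1 : 1 ≤ |y|) (hy2 : y ≠ -1) :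
    cf ((a : ℚ) :: (List.replicate k (-2 : ℚ) ++ [y])) =
      cf [(a : ℚ) + 1, (k : ℚ) + 1, y + 1] := by
  have hy0 : y + 1 ≠ 0 := fun h => hy2 (by linarith)
  have hD : ((k : ℚ) + 1) * y + k ≠ 0 := den_ne y hy1 k
  show ((a : ℚ) - cf (List.replicate k (-2 : ℚ) ++ [y]))⁻¹ =
    ((a : ℚ) + 1 - ((k : ℚ) + 1 - (y + 1 - cf [])⁻¹)⁻¹)⁻¹
  rw [cf_rep y hy1 k]
  show _ = ((a : ℚ) + 1 - ((k : ℚ) + 1 - (y + 1 - 0)⁻¹)⁻¹)⁻¹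
  congr 1
  rw [sub_zero]
  have hmid : (k : ℚ) + 1 - (y + 1)⁻¹ = (((k : ℚ) + 1) * y + k) / (y + 1) := by
    field_simp
    ring
  rw [hmid, inv_div]
  field_simp
  have hD2 : y * ((k : ℚ) + 1) + k ≠ 0 := by rw [mul_comm]; exact hD
  field_simp
  ring
end

section
/- Let a be an even integer with a ≥ 2, and let b, c ≥ 1 be integers of opposite parity (b + c odd). Then the continued fraction value [a, −2, …, −2, −4, −2, …, −2] (with b copies of −2 before the entry −4 and c copies of −2 after it) equals [2m+1, 2n, −2, 2l−1] for some integers m ≥ 1, n ≥ 1, l ≥ 2, or equals [2m+1, 2n−1, −2, 2l] for some integers m ≥ 1, n ≥ 2, l ≥ 1. -/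
lemma cf_cons (x : ℚ) (t : List ℚ) : cf (x :: t) = (x - cf t)⁻¹ := rfl

lemma cf_replicate (c : ℕ) : cf (List.replicate c (-2 : ℚ)) = -(c : ℚ) / (c + 1) := by
  induction c with
  | zero => simp [cf]
  | succ c ih =>
    rw [List.replicate_succ, cf_cons, ih]
    have h : (c : ℚ) + 1 ≠ 0 := by positivity
    have h2 : (-2 : ℚ) - (-(c : ℚ) / (c + 1)) = -(((c : ℚ) + 2) / (c + 1)) := by
      field_simp; ring
    rw [h2, inv_neg, inv_div]
    push_cast
    ring

lemma cf_mid (b c : ℕ) :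
    cf (List.replicate b (-2 : ℚ) ++ (-4 : ℚ) :: List.replicate c (-2 : ℚ)) =
      -((2 * (b : ℚ) + 1) * c + 3 * b + 1) / ((2 * (b : ℚ) + 3) * c + 3 * b + 4) := by
  induction b with
  | zero =>
    rw [List.replicate_zero, List.nil_append, cf_cons, cf_replicate]
    have h : (c : ℚ) + 1 ≠ 0 := by positivity
    have h2 : (-4 : ℚ) - (-(c : ℚ) / (c + 1)) = -((3 * (c : ℚ) + 4) / (c + 1)) := by
      field_simp; ring
    rw [h2, inv_neg, inv_div]
    push_cast
    ring
  | succ b ih =>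
    rw [List.replicate_succ, List.cons_append, cf_cons, ih]
    have hD : (2 * (b : ℚ) + 3) * c + 3 * b + 4 ≠ 0 := by positivity
    have h2 : (-2 : ℚ) - (-((2 * (b : ℚ) + 1) * c + 3 * b + 1) / ((2 * (b : ℚ) + 3) * c + 3 * b + 4))
        = -(((2 * (b : ℚ) + 5) * c + 3 * b + 7) / ((2 * (b : ℚ) + 3) * c + 3 * b + 4)) := by
      field_simp; ring
    rw [h2, inv_neg, inv_div]
    push_cast
    ring

lemma cf4 (x y z : ℚ) (hz : z ≠ 0) (h2 : 2 * z + 1 ≠ 0) (hW : y * (2 * z + 1) + z ≠ 0) :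
    cf [x, y, -2, z] = (y * (2 * z + 1) + z) / (x * (y * (2 * z + 1) + z) - (2 * z + 1)) := by
  rw [cf_cons, cf_cons, cf_cons, cf_cons]
  show (x - (y - ((-2:ℚ) - (z - cf []) ⁻¹)⁻¹)⁻¹)⁻¹ = _
  have h0 : cf [] = 0 := rfl
  rw [h0, sub_zero]
  have e1 : (-2 : ℚ) - z⁻¹ = -((2 * z + 1) / z) := by field_simp; ring
  rw [e1, inv_neg, inv_div]
  have e2 : y - -(z / (2 * z + 1)) = (y * (2 * z + 1) + z) / (2 * z + 1) := by
    rw [sub_neg_eq_add]; exact add_div' _ _ _ h2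
  rw [e2, inv_div]
  have e3 : x - (2 * z + 1) / (y * (2 * z + 1) + z)
      = (x * (y * (2 * z + 1) + z) - (2 * z + 1)) / (y * (2 * z + 1) + z) := by
    exact sub_div' hW
  rw [e3, inv_div]

theorem stmt_7 (a : ℤ) (ha : 2 ≤ a) (hae : Even a) (b c : ℕ)
    (hb : 1 ≤ b) (hc : 1 ≤ c) (hbc : Odd (b + c)) :
    (∃ m n l : ℤ, 1 ≤ m ∧ 1 ≤ n ∧ 2 ≤ l ∧
      cf ((a : ℚ) :: (List.replicate b (-2 : ℚ) ++ (-4 : ℚ) :: List.replicate c (-2 : ℚ))) =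
        cf [2 * (m : ℚ) + 1, 2 * (n : ℚ), -2, 2 * (l : ℚ) - 1]) ∨
    (∃ m n l : ℤ, 1 ≤ m ∧ 2 ≤ n ∧ 1 ≤ l ∧
      cf ((a : ℚ) :: (List.replicate b (-2 : ℚ) ++ (-4 : ℚ) :: List.replicate c (-2 : ℚ))) =
        cf [2 * (m : ℚ) + 1, 2 * (n : ℚ) - 1, -2, 2 * (l : ℚ)]) := by
  obtain ⟨r, hr⟩ := hae
  obtain ⟨t, ht⟩ := hbc
  have hr1 : 1 ≤ r := by omega
  have ha' : (a : ℚ) = 2 * ((r : ℤ) : ℚ) := by push_cast [hr]; ring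
  have hD : (2 * (b : ℚ) + 3) * c + 3 * b + 4 ≠ 0 := by positivity
  have haq : (2 : ℚ) ≤ (a : ℚ) := by exact_mod_cast ha
  have hden : (a : ℚ) * ((2 * (b : ℚ) + 3) * c + 3 * b + 4)
      + ((2 * (b : ℚ) + 1) * c + 3 * b + 1) ≠ 0 := by
    have hDpos : (0:ℚ) < (2 * (b : ℚ) + 3) * c + 3 * b + 4 := by positivity
    have hN : (0:ℚ) ≤ (2 * (b : ℚ) + 1) * c + 3 * b + 1 := by positivity
    nlinarith [mul_le_mul_of_nonneg_right haq hDpos.le]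
  have hL : cf ((a : ℚ) :: (List.replicate b (-2 : ℚ) ++ (-4 : ℚ) :: List.replicate c (-2 : ℚ)))
      = ((2 * (b : ℚ) + 3) * c + 3 * b + 4)
        / ((a : ℚ) * ((2 * (b : ℚ) + 3) * c + 3 * b + 4) + ((2 * (b : ℚ) + 1) * c + 3 * b + 1)) := by
    rw [cf_cons, cf_mid]
    have e : (a : ℚ) - -((2 * (b : ℚ) + 1) * c + 3 * b + 1) / ((2 * (b : ℚ) + 3) * c + 3 * b + 4)
        = ((a : ℚ) * ((2 * (b : ℚ) + 3) * c + 3 * b + 4) + ((2 * (b : ℚ) + 1) * c + 3 * b + 1))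
          / ((2 * (b : ℚ) + 3) * c + 3 * b + 4) := by
      field_simp; ring
    rw [e, inv_div]
  rcases Nat.even_or_odd b with hbe | hbo
  · -- b even, c odd : case B
    obtain ⟨b', hb'⟩ := hbe
    have hco : Odd c := by
      rcases Nat.even_or_odd c with h | h
      · exfalso; rcases h with ⟨k, hk⟩; omega
      · exact h
    obtain ⟨c', hc'⟩ := hco
    have hn2 : 2 ≤ (b' : ℤ) + 1 := by omega
    have hl2 : 1 ≤ (c' : ℤ) + 1 := by omega
    refine Or.inr ⟨r, (b' : ℤ) + 1, (c' : ℤ) + 1, hr1, hn2, hl2, ?_⟩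
    have hbq : (b : ℚ) = 2 * (((b' : ℤ) + 1 : ℤ) : ℚ) - 2 := by push_cast [hb']; ring
    have hcq : (c : ℚ) = 2 * (((c' : ℤ) + 1 : ℤ) : ℚ) - 1 := by push_cast [hc']; ring
    rw [hbq, hcq] at hL
    set n : ℚ := (((b' : ℤ) + 1 : ℤ) : ℚ) with hn
    set l : ℚ := (((c' : ℤ) + 1 : ℤ) : ℚ) with hl
    have hl1 : (1 : ℚ) ≤ l := by rw [hl]; push_cast; linarith [Nat.cast_nonneg (α := ℚ) c']
    have hn1 : (1 : ℚ) ≤ n := by rw [hn]; push_cast; linarith [Nat.cast_nonneg (α := ℚ) b']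
    rw [cf4 (2 * ((r : ℤ) : ℚ) + 1) (2 * n - 1) (2 * l) (by nlinarith) (by nlinarith)
      (by nlinarith)]
    rw [hL, ha']
    ring
  · -- b odd, c even : case A
    obtain ⟨b', hb'⟩ := hbo
    have hce : Even c := by
      rcases Nat.even_or_odd c with h | h
      · exact h
      · exfalso; rcases h with ⟨k, hk⟩; omega
    obtain ⟨c', hc'⟩ := hce
    have hc1 : 1 ≤ c' := by omega
    have hn2 : 1 ≤ (b' : ℤ) + 1 := by omega
    have hl2 : 2 ≤ (c' : ℤ) + 1 := by omega
    refine Or.inl ⟨r, (b' : ℤ) + 1, (c' : ℤ) + 1, hr1, hn2, hl2, ?_⟩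
    have hbq : (b : ℚ) = 2 * (((b' : ℤ) + 1 : ℤ) : ℚ) - 1 := by push_cast [hb']; ring
    have hcq : (c : ℚ) = 2 * (((c' : ℤ) + 1 : ℤ) : ℚ) - 2 := by push_cast [hc']; ring
    rw [hbq, hcq] at hL
    set n : ℚ := (((b' : ℤ) + 1 : ℤ) : ℚ) with hn
    set l : ℚ := (((c' : ℤ) + 1 : ℤ) : ℚ) with hl
    have hl1 : (2 : ℚ) ≤ l := by
      rw [hl]; push_cast
      have : (1 : ℚ) ≤ (c' : ℚ) := by exact_mod_cast hc1
      linarith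
    have hn1 : (1 : ℚ) ≤ n := by rw [hn]; push_cast; linarith [Nat.cast_nonneg (α := ℚ) b']
    rw [cf4 (2 * ((r : ℤ) : ℚ) + 1) (2 * n) (2 * l - 1) (by nlinarith) (by nlinarith)
      (by nlinarith)]
    rw [hL, ha']
    ring
end

section
/- For every nonzero integer a and every integer j ≥ 0, the continued fraction value [a, 2, …, 2] (with j copies of 2 after the entry a) equals [a − 1, −(j+1)]. -/
lemma cf_rep_s8 (j : ℕ) : cf (List.replicate j (2 : ℚ)) = (j : ℚ) / (j + 1) := by
  induction j with
  | zero => simp [cf]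
  | succ n ih =>
    rw [List.replicate_succ, cf, ih]
    have h1 : (n : ℚ) + 1 ≠ 0 := by positivity
    have key : (2 : ℚ) - (n : ℚ) / ((n : ℚ) + 1) = ((n : ℚ) + 2) / ((n : ℚ) + 1) := by
      field_simp; ring
    rw [key, inv_div]
    push_cast
    ring_nf

theorem stmt_8 (a : ℤ) (ha : a ≠ 0) (j : ℕ) :
    cf ((a : ℚ) :: List.replicate j (2 : ℚ)) =
      cf [(a : ℚ) - 1, -((j : ℚ) + 1)] := by
  rw [cf, cf_rep_s8, cf, cf, cf]
  have h1 : (j : ℚ) + 1 ≠ 0 := by positivity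
  congr 1
  rw [sub_zero, show (-((j : ℚ) + 1))⁻¹ = -((j : ℚ) + 1)⁻¹ from by rw [inv_neg]]
  field_simp
  ring
end

section
/- Let k ≥ 3 be an odd integer and let b be an even integer. Suppose v is a rational number such that either b ≥ 4 and v = [b, 2, …, 2] (with k − 1 copies of 2), or b ≥ 4 and v = [b, −2, …, −2] (with k − 1 copies of −2), or b = 2 and v = [2, −2, …, −2] (with k − 1 copies of −2). Then there exist integers m ≥ 1 and n with n ∉ {0, 1} such that v = [2m+1, 2n−1]. -/
lemma cf_rep2 (j : ℕ) : cf (List.replicate j 2) = j / (j + 1) := by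
  induction j with
  | zero => simp [cf]
  | succ n ih =>
    have h1 : (n : ℚ) + 1 ≠ 0 := by positivity
    have h2 : (n : ℚ) + 2 ≠ 0 := by positivity
    rw [List.replicate_succ]
    show (2 - cf (List.replicate n 2))⁻¹ = _
    rw [ih]
    have h3 : (2 : ℚ) - n/(n+1) = (n+2)/(n+1) := by field_simp; ring
    rw [h3, inv_div]
    push_cast
    rw [show ((n:ℚ)+1+1) = (n:ℚ)+2 by ring]

lemma cf_repm2 (j : ℕ) : cf (List.replicate j (-2)) = -((j : ℚ) / (j + 1)) := by
  induction j with
  | zero => simp [cf]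
  | succ n ih =>
    have h1 : (n : ℚ) + 1 ≠ 0 := by positivity
    rw [List.replicate_succ]
    show (-2 - cf (List.replicate n (-2)))⁻¹ = _
    rw [ih]
    have h3 : (-2 : ℚ) - (-((n:ℚ)/(n+1))) = (-(n+2))/(n+1) := by field_simp; ring
    rw [h3]
    push_cast
    rw [neg_div, inv_neg, inv_div]
    rw [show ((n:ℚ)+1+1) = (n:ℚ)+2 by ring]

theorem stmt_10 (k : ℕ) (hk : 3 ≤ k) (hkodd : Odd k) (b : ℤ) (hbe : Even b) (v : ℚ)
    (h : (4 ≤ b ∧ v = cf ((b : ℚ) :: List.replicate (k - 1) (2 : ℚ))) ∨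
         (4 ≤ b ∧ v = cf ((b : ℚ) :: List.replicate (k - 1) (-2 : ℚ))) ∨
         (b = 2 ∧ v = cf ((2 : ℚ) :: List.replicate (k - 1) (-2 : ℚ)))) :
    ∃ m n : ℤ, 1 ≤ m ∧ n ≠ 0 ∧ n ≠ 1 ∧
      v = cf [2 * (m : ℚ) + 1, 2 * (n : ℚ) - 1] := by
  obtain ⟨K, hK⟩ := hkodd
  have hK1 : 1 ≤ K := by omega
  have hkm1 : k - 1 = 2 * K := by omega
  have hKQ : (2 * (K : ℚ) + 1) ≠ 0 := by positivity
  obtain ⟨c, hc⟩ := hbe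
  rcases h with ⟨hb, hv⟩ | ⟨hb, hv⟩ | ⟨hb, hv⟩
  · -- v = k/(bk - k + 1), take 2m+1 = b-1, 2n-1 = -k
    refine ⟨c - 1, -K, by omega, by omega, by omega, ?_⟩
    rw [hv, hkm1]
    show ((b : ℚ) - cf (List.replicate (2*K) 2))⁻¹ =
      (2 * ((c : ℤ) - 1 : ℤ) + 1 - ((2 * (-(K : ℤ) : ℤ) - 1 : ℚ) - cf [])⁻¹)⁻¹
    rw [cf_rep2]
    show _ = (2 * ((c : ℤ) - 1 : ℤ) + 1 - ((2 * (-(K : ℤ) : ℤ) - 1 : ℚ) - 0)⁻¹)⁻¹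
    congr 1
    have hbq : (b : ℚ) = 2 * c := by rw [hc]; push_cast; ring
    push_cast
    rw [hbq]
    have hA : ((K:ℚ)*2 + 1) ≠ 0 := by positivity
    rw [sub_zero, show (2 * (-(K:ℚ)) - 1) = -((K:ℚ)*2+1) by ring, inv_neg, inv_eq_one_div]
    field_simp
    ring
  · -- v = k/(bk + k - 1), take 2m+1 = b+1, 2n-1 = k
    refine ⟨c, K + 1, by omega, by omega, by omega, ?_⟩
    rw [hv, hkm1]
    show ((b : ℚ) - cf (List.replicate (2*K) (-2)))⁻¹ =
      (2 * (c : ℤ) + 1 - ((2 * ((K : ℤ) + 1 : ℤ) - 1 : ℚ) - cf [])⁻¹)⁻¹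
    rw [cf_repm2]
    show _ = (2 * (c : ℤ) + 1 - ((2 * ((K : ℤ) + 1 : ℤ) - 1 : ℚ) - 0)⁻¹)⁻¹
    congr 1
    have hbq : (b : ℚ) = 2 * c := by rw [hc]; push_cast; ring
    push_cast
    rw [hbq]
    have hA : ((K:ℚ)*2 + 1) ≠ 0 := by positivity
    rw [sub_zero, show (2 * ((K:ℚ)+1) - 1) = (K:ℚ)*2+1 by ring, inv_eq_one_div]
    field_simp
    ring
  · -- b = 2, m = 1, n = K+1
    refine ⟨1, K + 1, le_refl 1, by omega, by omega, ?_⟩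
    rw [hv, hkm1]
    show ((2 : ℚ) - cf (List.replicate (2*K) (-2)))⁻¹ =
      (2 * ((1 : ℤ) : ℚ) + 1 - ((2 * ((K : ℤ) + 1 : ℤ) - 1 : ℚ) - cf [])⁻¹)⁻¹
    rw [cf_repm2]
    show _ = (2 * ((1 : ℤ) : ℚ) + 1 - ((2 * ((K : ℤ) + 1 : ℤ) - 1 : ℚ) - 0)⁻¹)⁻¹
    congr 1
    push_cast
    have hA : ((K:ℚ)*2 + 1) ≠ 0 := by positivity
    rw [sub_zero, show (2 * ((K:ℚ)+1) - 1) = (K:ℚ)*2+1 by ring, inv_eq_one_div]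
    field_simp
    ring
end
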